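/- Let t ≥ 2 be an even integer, n, k, d ≥ 1 integers, c ∈ ℕ, and S ⊆ [n] with |S| ≥ n/k^c. Suppose the numbers z_r^{i,j} ∈ {0,1} (for r ∈ [n], i,j ∈ [k]) satisfy Σ_{i,j=1}^k z_r^{i,j} = 1 for every r, and the vectors v_1, …, v_n ∈ ℝ^d satisfy z_r^{i,j} · z_s^{i,j} · (v_r − v_s) = 0 for all r, s ∈ [n] and i, j ∈ [k], and for every u ∈ ℝ^d, (1/n) Σ_{r=1}^n ⟨v_r, u⟩^t ≤ 2·(4t)^{t/2}·‖u‖^t. Then for every i, j ∈ [k], (1/|S|) Σ_{r ∈ S} z_r^{i,j} · ‖v_r‖^t ≤ 2 · k^c · (4t)^{t/2}. -/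

import Mathlib

open Finset

/-- Semantic content of the main technical lemma of the clustering argument:
for each cluster pair `(i,j)`, the weighted average of `‖v_r‖^t` over a subset `S`
of size at least `n / k^c` is bounded. -/
theorem stmt_2
    (t n k d : ℕ) (ht2 : 2 ≤ t) (hte : Even t)
    (hn : 0 < n) (hk : 0 < k) (hd : 0 < d) (c : ℕ)
    (S : Finset (Fin n)) (hS : (n : ℝ) / (k : ℝ) ^ c ≤ (S.card : ℝ))
    (z : Fin n → Fin k → Fin k → ℝ)
    (hz01 : ∀ r i j, z r i j = 0 ∨ z r i j = 1)
    (hzsum : ∀ r, ∑ i, ∑ j, z r i j = 1)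
    (v : Fin n → EuclideanSpace ℝ (Fin d))
    (hconst : ∀ r s i j, (z r i j * z s i j) • (v r - v s) = 0)
    (hmom : ∀ u : EuclideanSpace ℝ (Fin d),
      (1 / (n : ℝ)) * ∑ r, (inner ℝ (v r) u : ℝ) ^ t
        ≤ 2 * ((4 * t : ℝ)) ^ (t / 2) * ‖u‖ ^ t) :
    ∀ i j : Fin k,
      (1 / (S.card : ℝ)) * ∑ r ∈ S, z r i j * ‖v r‖ ^ t
        ≤ 2 * (k : ℝ) ^ c * ((4 * t : ℝ)) ^ (t / 2) := by
  intro i j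
  have hkc : (0:ℝ) < (k:ℝ) ^ c := by positivity
  have hScard : (0:ℝ) < (S.card : ℝ) := lt_of_lt_of_le (by positivity) hS
  have hRHSnn : (0:ℝ) ≤ 2 * (k:ℝ) ^ c * ((4 * t : ℝ)) ^ (t / 2) := by positivity
  by_cases hall : ∀ r ∈ S, z r i j * ‖v r‖ ^ t = 0
  · rw [Finset.sum_congr rfl hall]
    simpa using hRHSnn
  · push_neg at hall
    obtain ⟨r₀, hr₀S, hr₀⟩ := hall
    have hz1 : z r₀ i j = 1 := by
      rcases hz01 r₀ i j with h | h
      · exact absurd (by simp [h]) hr₀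
      · exact h
    set w := v r₀ with hw
    have hwne : ‖w‖ ^ t ≠ 0 := by
      intro h; exact hr₀ (by rw [h, mul_zero])
    have hwpos : 0 < ‖w‖ ^ t := lt_of_le_of_ne (by positivity) (Ne.symm hwne)
    have hveq : ∀ r, z r i j = 1 → v r = w := by
      intro r hr
      have := hconst r r₀ i j
      rw [hr, hz1, one_mul, one_smul, sub_eq_zero] at this
      exact this
    set T := Finset.univ.filter (fun r => z r i j = 1) with hT
    set M := S.filter (fun r => z r i j = 1) with hM
    have hMT : M ⊆ T := by
      intro r hr
      simp only [hM, Finset.mem_filter] at hr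
      simp [hT, hr.2]
    -- sum over S equals M.card * ‖w‖^t
    have hsumS : ∑ r ∈ S, z r i j * ‖v r‖ ^ t = (M.card : ℝ) * ‖w‖ ^ t := by
      rw [← Finset.sum_filter_add_sum_filter_not S (fun r => z r i j = 1)]
      have h2 : ∑ r ∈ S.filter (fun r => ¬ z r i j = 1), z r i j * ‖v r‖ ^ t = 0 := by
        apply Finset.sum_eq_zero
        intro r hr
        simp only [Finset.mem_filter] at hr
        rcases hz01 r i j with h | h
        · simp [h]
        · exact absurd h hr.2
      rw [h2, add_zero]
      rw [Finset.sum_congr rfl (fun r hr => ?_), Finset.sum_const, nsmul_eq_mul]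
      simp only [hM, Finset.mem_filter] at hr
      rw [hr.2, hveq r hr.2, one_mul]
    -- moment bound at u = w
    have hinner : (inner ℝ w w : ℝ) ^ t = (‖w‖ ^ t) ^ 2 := by
      rw [real_inner_self_eq_norm_sq, ← pow_mul, ← pow_mul, Nat.mul_comm]
    have hlow : (T.card : ℝ) * (‖w‖ ^ t) ^ 2 ≤ ∑ r, (inner ℝ (v r) w : ℝ) ^ t := by
      calc (T.card : ℝ) * (‖w‖ ^ t) ^ 2 = ∑ r ∈ T, (inner ℝ (v r) w : ℝ) ^ t := by
            rw [Finset.sum_congr rfl (fun r hr => ?_), Finset.sum_const, nsmul_eq_mul]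
            simp only [hT, Finset.mem_filter] at hr
            rw [hveq r hr.2, hinner]
        _ ≤ ∑ r, (inner ℝ (v r) w : ℝ) ^ t := by
            apply Finset.sum_le_sum_of_subset_of_nonneg (Finset.subset_univ T)
            intro r _ _
            exact hte.pow_nonneg _
    have hmw := hmom w
    have hnpos : (0:ℝ) < (n:ℝ) := by exact_mod_cast hn
    have hkey : (T.card : ℝ) * ‖w‖ ^ t ≤ 2 * (n:ℝ) * ((4 * t : ℝ)) ^ (t / 2) := by
      have h1 : (T.card : ℝ) * (‖w‖ ^ t) ^ 2 ≤ 2 * (n:ℝ) * ((4 * t : ℝ)) ^ (t / 2) * ‖w‖ ^ t := by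
        calc (T.card : ℝ) * (‖w‖ ^ t) ^ 2 ≤ ∑ r, (inner ℝ (v r) w : ℝ) ^ t := hlow
          _ = (n:ℝ) * ((1 / (n:ℝ)) * ∑ r, (inner ℝ (v r) w : ℝ) ^ t) := by
              field_simp
          _ ≤ (n:ℝ) * (2 * ((4 * t : ℝ)) ^ (t / 2) * ‖w‖ ^ t) := by
              exact mul_le_mul_of_nonneg_left hmw hnpos.le
          _ = 2 * (n:ℝ) * ((4 * t : ℝ)) ^ (t / 2) * ‖w‖ ^ t := by ring
      have := (mul_le_mul_iff_of_pos_right hwpos).mp (by nlinarith [h1] : (T.card : ℝ) * ‖w‖ ^ t * ‖w‖ ^ t ≤ 2 * (n:ℝ) * ((4 * t : ℝ)) ^ (t / 2) * ‖w‖ ^ t)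
      exact this
    -- finish
    rw [hsumS]
    have hMle : (M.card : ℝ) ≤ (T.card : ℝ) := by
      exact_mod_cast Finset.card_le_card hMT
    have h3 : (M.card : ℝ) * ‖w‖ ^ t ≤ 2 * (n:ℝ) * ((4 * t : ℝ)) ^ (t / 2) :=
      le_trans (mul_le_mul_of_nonneg_right hMle hwpos.le) hkey
    have hnS : (n:ℝ) ≤ (S.card : ℝ) * (k:ℝ) ^ c := by
      rw [div_le_iff₀ hkc] at hS; linarith
    rw [one_div, inv_mul_le_iff₀ hScard]
    calc (M.card : ℝ) * ‖w‖ ^ t ≤ 2 * (n:ℝ) * ((4 * t : ℝ)) ^ (t / 2) := h3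
      _ ≤ 2 * ((S.card : ℝ) * (k:ℝ) ^ c) * ((4 * t : ℝ)) ^ (t / 2) := by
          apply mul_le_mul_of_nonneg_right _ (by positivity)
          linarith
      _ = (S.card : ℝ) * (2 * (k:ℝ) ^ c * ((4 * t : ℝ)) ^ (t / 2)) := by ring
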